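/- Let c > 0. For all integers m, n ≥ 1, the parametric Legendre rational functions satisfy the orthogonality relation ∫₀¹ R_m(c; x) R_n(c; x) dx = δ_{mn}/((1+c)(2n−1)). -/

import Mathlib

open Polynomial MeasureTheory Real Filter

/-- The Legendre polynomial of degree `n`, via the Rodrigues formula
`P_n(x) = 1/(2^n n!) dⁿ/dxⁿ (x² - 1)ⁿ`. -/
noncomputable def legendre (n : ℕ) : Polynomial ℝ :=
  (1 / (2 ^ n * n.factorial) : ℝ) • derivative^[n] ((X ^ 2 - 1) ^ n)

/-- The shifted Legendre polynomial `P̃_n(x) = P_n(2x - 1)` on `[0,1]`. -/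
noncomputable def shiftedLegendre (n : ℕ) (x : ℝ) : ℝ :=
  (legendre n).eval (2 * x - 1)

/-- The parametric altered Legendre polynomial
`A_n(c; x) = (c/(c+1)) (x + 1/c) P̃_{n-1}(x)`. -/
noncomputable def alteredLegendreC (c : ℝ) (n : ℕ) (x : ℝ) : ℝ :=
  (c / (c + 1)) * (x + 1 / c) * shiftedLegendre (n - 1) x

/-- The parametric Legendre rational function
`R_n(c; x) = (-1)^{n-1} A_n(c; (1-x)/(1+cx))`. -/
noncomputable def legendreRationalC (c : ℝ) (n : ℕ) (x : ℝ) : ℝ :=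
  (-1) ^ (n - 1) * alteredLegendreC c n ((1 - x) / (1 + c * x))

section Aux

open intervalIntegral

lemma aux_dvd (n k : ℕ) (hk : k ≤ n) :
    ((X ^ 2 - 1 : ℝ[X])) ^ (n - k) ∣ derivative^[k] ((X ^ 2 - 1) ^ n) := by
  induction k with
  | zero => simp
  | succ k ih =>
    obtain ⟨q, hq⟩ := ih (le_of_lt (Nat.lt_of_succ_le hk))
    rw [Function.iterate_succ_apply', hq]
    have hnk : n - k = (n - (k+1)) + 1 := by omega
    rw [hnk]
    refine ⟨(((n - (k+1)) : ℕ) + 1 : ℝ[X]) * (derivative (X^2-1)) * q + (X^2-1) * derivative q, ?_⟩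
    rw [derivative_mul, derivative_pow]
    simp only [map_add, map_natCast, map_one, Nat.cast_add, Nat.cast_one, Nat.add_sub_cancel]
    ring

lemma aux_eval (n k : ℕ) (hk : k < n) {x : ℝ} (hx : x ^ 2 = 1) :
    (derivative^[k] ((X ^ 2 - 1 : ℝ[X]) ^ n)).eval x = 0 := by
  obtain ⟨q, hq⟩ := aux_dvd n k hk.le
  rw [hq, eval_mul, eval_pow, eval_sub, eval_pow, eval_one, eval_X, hx]
  have : n - k ≠ 0 := by omega
  simp [zero_pow this]

lemma monic_G (n : ℕ) : ((X ^ 2 - 1 : ℝ[X]) ^ n).Monic := by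
  have h : (X ^ 2 - 1 : ℝ[X]) = X ^ 2 - C 1 := by norm_num
  rw [h]
  exact (monic_X_pow_sub_C (1:ℝ) (by norm_num)).pow n

lemma natDegree_G (n : ℕ) : ((X ^ 2 - 1 : ℝ[X]) ^ n).natDegree = 2 * n := by
  have h : (X ^ 2 - 1 : ℝ[X]) = X ^ 2 - C 1 := by norm_num
  rw [h, ((monic_X_pow_sub_C (1:ℝ) (by norm_num))).natDegree_pow, natDegree_X_pow_sub_C]
  ring

lemma iter_deriv_top (n : ℕ) :
    derivative^[2 * n] ((X ^ 2 - 1 : ℝ[X]) ^ n) = C ((2 * n).factorial : ℝ) := by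
  set f : ℝ[X] := (X ^ 2 - 1) ^ n with hf
  have hsplit : f = f.eraseLead + X ^ (2 * n) := by
    have := f.eraseLead_add_C_mul_X_pow
    rw [(monic_G n).leadingCoeff, map_one, one_mul, natDegree_G n] at this
    exact this.symm
  have hzero : derivative^[2 * n] f.eraseLead = 0 := by
    rcases f.eraseLead_natDegree_lt_or_eraseLead_eq_zero with h | h
    · exact iterate_derivative_eq_zero (by rw [natDegree_G] at h; omega)
    · simp [h]
  rw [hsplit, iterate_map_add, hzero, zero_add, iterate_derivative_X_pow_eq_smul]
  simp [Nat.descFactorial_self, C_eq_natCast, smul_eq_C_mul]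

lemma poly_ibp (p q : ℝ[X]) (a b : ℝ) :
    ∫ x in a..b, p.eval x * (derivative q).eval x =
      p.eval b * q.eval b - p.eval a * q.eval a -
        ∫ x in a..b, (derivative p).eval x * q.eval x := by
  apply integral_mul_deriv_eq_deriv_mul_of_hasDerivAt
  · exact (p.continuous_aeval).continuousOn
  · exact (q.continuous_aeval).continuousOn
  · intro x _; exact p.hasDerivAt x
  · intro x _; exact q.hasDerivAt x
  · exact ((derivative p).continuous_aeval).intervalIntegrable _ _
  · exact ((derivative q).continuous_aeval).intervalIntegrable _ _

lemma iter_ibp (p : ℝ[X]) (n k : ℕ) (hk : k ≤ n) :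
    ∫ x in (-1:ℝ)..1, p.eval x * (derivative^[n] ((X^2-1:ℝ[X])^n)).eval x =
      (-1)^k * ∫ x in (-1:ℝ)..1,
        (derivative^[k] p).eval x * (derivative^[n-k] ((X^2-1:ℝ[X])^n)).eval x := by
  induction k with
  | zero => simp
  | succ k ih =>
    rw [ih (by omega)]
    have hstep : (derivative^[n-k] ((X^2-1:ℝ[X])^n)) =
        derivative (derivative^[n-(k+1)] ((X^2-1:ℝ[X])^n)) := by
      have : n - k = (n - (k+1)) + 1 := by omega
      rw [this, Function.iterate_succ_apply']
    rw [hstep, poly_ibp]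
    have h1 : (derivative^[n-(k+1)] ((X^2-1:ℝ[X])^n)).eval 1 = 0 :=
      aux_eval n _ (by omega) (by norm_num)
    have h2 : (derivative^[n-(k+1)] ((X^2-1:ℝ[X])^n)).eval (-1) = 0 :=
      aux_eval n _ (by omega) (by norm_num)
    rw [h1, h2, Function.iterate_succ_apply']
    ring

lemma integral_one_sub_sq (n : ℕ) :
    ∫ x in (-1:ℝ)..1, (1 - x^2)^n =
      2^(2*n+1) * ((n.factorial : ℝ))^2 / ((2*n+1).factorial) := by
  induction n with
  | zero => norm_num
  | succ m ih =>
    set Im : ℝ := ∫ x in (-1:ℝ)..1, (1 - x^2)^m with hIm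
    set I : ℝ := ∫ x in (-1:ℝ)..1, (1 - x^2)^(m+1) with hI
    have hderiv : ∀ x ∈ Set.uIcc (-1:ℝ) 1, HasDerivAt (fun x : ℝ => x * (1 - x^2)^(m+1))
        ((2*(m:ℝ)+3) * (1 - x^2)^(m+1) - (2*(m:ℝ)+2) * (1 - x^2)^m) x := by
      intro x _
      have h1 : HasDerivAt (fun x : ℝ => x * (1 - x^2)^(m+1))
          (1 * (1 - x^2)^(m+1) + x * (((m:ℝ)+1) * (1 - x^2)^m * (0 - 2*x))) x := by
        exact (hasDerivAt_id x).mul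
          ((((hasDerivAt_const x (1:ℝ)).sub ((hasDerivAt_pow 2 x))).pow (m+1)).congr_deriv
            (by simp only [Pi.sub_apply]; push_cast; ring))
      convert h1 using 1
      have hp : (1 - x^2)^(m+1) = (1 - x^2)^m * (1 - x^2) := pow_succ _ _
      rw [hp]; ring
    have hcont : Continuous fun x : ℝ =>
        (2*(m:ℝ)+3) * (1 - x^2)^(m+1) - (2*(m:ℝ)+2) * (1 - x^2)^m := by
      continuity
    have hzero : ∫ x in (-1:ℝ)..1,
        ((2*(m:ℝ)+3) * (1 - x^2)^(m+1) - (2*(m:ℝ)+2) * (1 - x^2)^m) = 0 := by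
      rw [integral_eq_sub_of_hasDerivAt hderiv (hcont.intervalIntegrable _ _)]
      norm_num
    have hint1 : IntervalIntegrable (fun x : ℝ => (1 - x^2)^(m+1)) volume (-1) 1 :=
      (by continuity : Continuous fun x : ℝ => (1 - x^2)^(m+1)).intervalIntegrable _ _
    have hint2 : IntervalIntegrable (fun x : ℝ => (1 - x^2)^m) volume (-1) 1 :=
      (by continuity : Continuous fun x : ℝ => (1 - x^2)^m).intervalIntegrable _ _
    have hsplit : (2*(m:ℝ)+3) * I - (2*(m:ℝ)+2) * Im = 0 := by
      rw [hI, hIm, ← intervalIntegral.integral_const_mul, ← intervalIntegral.integral_const_mul, ← integral_sub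
        (hint1.const_mul _) (hint2.const_mul _)]
      exact hzero
    have hrec : I = (2*(m:ℝ)+2) / (2*(m:ℝ)+3) * Im := by
      have h3 : (2*(m:ℝ)+3) ≠ 0 := by positivity
      field_simp
      linarith [hsplit]
    rw [hrec, ih]
    have hfac : ((2*(m+1)+1).factorial : ℝ) =
        (2*(m:ℝ)+3) * ((2*(m:ℝ)+2) * ((2*m+1).factorial : ℝ)) := by
      have : 2*(m+1)+1 = (2*m+1) + 1 + 1 := by ring
      rw [this, Nat.factorial_succ, Nat.factorial_succ]
      push_cast; ring
    rw [hfac]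
    have h1 : ((2*m+1).factorial : ℝ) ≠ 0 := by positivity
    have h3 : (2*(m:ℝ)+3) ≠ 0 := by positivity
    have h2 : (2*(m:ℝ)+2) ≠ 0 := by positivity
    rw [Nat.factorial_succ m]
    field_simp [Nat.factorial_succ]
    push_cast
    ring

lemma legendre_natDegree_le (m : ℕ) : (legendre m).natDegree ≤ m := by
  unfold legendre
  refine (natDegree_smul_le _ _).trans ?_
  refine (natDegree_iterate_derivative _ _).trans ?_
  rw [natDegree_G]; omega

lemma iterate_derivative_legendre_self (n : ℕ) :
    derivative^[n] (legendre n) = C (((2*n).factorial : ℝ) / (2 ^ n * n.factorial)) := by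
  unfold legendre
  rw [iterate_derivative_smul]
  rw [← Function.iterate_add_apply]
  have : n + n = 2 * n := by ring
  rw [this, iter_deriv_top, smul_C]
  congr 1
  rw [smul_eq_mul]
  ring

lemma legendre_orth_le {m n : ℕ} (hmn : m ≤ n) :
    ∫ x in (-1:ℝ)..1, (legendre m).eval x * (legendre n).eval x =
      if m = n then 2 / (2*(n:ℝ)+1) else 0 := by
  have hexp : ∀ x : ℝ, (legendre n).eval x =
      (1 / (2 ^ n * n.factorial) : ℝ) * (derivative^[n] ((X^2-1:ℝ[X])^n)).eval x := by
    intro x; unfold legendre; simp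
  have step1 : ∫ x in (-1:ℝ)..1, (legendre m).eval x * (legendre n).eval x =
      (1 / (2 ^ n * n.factorial) : ℝ) *
        ∫ x in (-1:ℝ)..1, (legendre m).eval x * (derivative^[n] ((X^2-1:ℝ[X])^n)).eval x := by
    rw [← intervalIntegral.integral_const_mul]
    congr 1; funext x; rw [hexp]; ring
  rw [step1, iter_ibp _ n n le_rfl]
  rcases lt_or_eq_of_le hmn with h | h
  · have hz : derivative^[n] (legendre m) = 0 :=
      iterate_derivative_eq_zero (lt_of_le_of_lt (legendre_natDegree_le m) h)
    rw [hz]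
    simp [h.ne]
  · subst h
    rw [iterate_derivative_legendre_self]
    have heval : ∀ x : ℝ, (C (((2*m).factorial : ℝ) / (2 ^ m * m.factorial))).eval x *
        (derivative^[m-m] ((X^2-1:ℝ[X])^m)).eval x =
        (((2*m).factorial : ℝ) / (2 ^ m * m.factorial)) * ((-1:ℝ)^m * (1 - x^2)^m) := by
      intro x
      rw [Nat.sub_self, Function.iterate_zero_apply, eval_C]
      congr 1
      rw [eval_pow, eval_sub, eval_pow, eval_one, eval_X]
      rw [← neg_sub, neg_pow]
    rw [if_pos rfl]
    calc (1 / (2 ^ m * m.factorial) : ℝ) * ((-1)^m * ∫ x in (-1:ℝ)..1,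
          (C (((2*m).factorial : ℝ) / (2 ^ m * m.factorial))).eval x *
          (derivative^[m-m] ((X^2-1:ℝ[X])^m)).eval x)
        = (1 / (2 ^ m * m.factorial) : ℝ) * ((-1)^m *
            ((((2*m).factorial : ℝ) / (2 ^ m * m.factorial)) * ((-1:ℝ)^m *
              ∫ x in (-1:ℝ)..1, (1 - x^2)^m))) := by
          congr 1
          congr 1
          rw [← intervalIntegral.integral_const_mul, ← intervalIntegral.integral_const_mul]
          congr 1; funext x; rw [heval x]
      _ = 2 / (2*(m:ℝ)+1) := by
          rw [integral_one_sub_sq]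
          have h1 : ((-1:ℝ)^m) * ((-1:ℝ)^m) = 1 := by
            rw [← pow_add]; exact (neg_one_pow_eq_one_iff_even (by norm_num)).2 ⟨m, by ring⟩
          have hfac : ((2*m+1).factorial : ℝ) = (2*(m:ℝ)+1) * ((2*m).factorial : ℝ) := by
            rw [Nat.factorial_succ]; push_cast; ring
          have h2 : ((2*m).factorial : ℝ) ≠ 0 := by positivity
          have h3 : ((m.factorial : ℝ)) ≠ 0 := by positivity
          have h4 : (2:ℝ)^m ≠ 0 := by positivity
          have h5 : (2*(m:ℝ)+1) ≠ 0 := by positivity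
          set E : ℝ := 2^(2*m+1) * ((m.factorial : ℝ))^2 / (((2*m+1).factorial : ℝ)) with hE
          have hs : ((-1:ℝ)^m * ((((2*m).factorial : ℝ) / (2 ^ m * (m.factorial:ℝ))) * ((-1:ℝ)^m * E)))
              = (((2*m).factorial : ℝ) / (2 ^ m * (m.factorial:ℝ))) * E := by
            rw [show ((-1:ℝ)^m * ((((2*m).factorial : ℝ) / (2 ^ m * (m.factorial:ℝ))) * ((-1:ℝ)^m * E)))
              = ((-1:ℝ)^m * (-1:ℝ)^m) * ((((2*m).factorial : ℝ) / (2 ^ m * (m.factorial:ℝ))) * E) from by ring,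
              h1, one_mul]
          rw [hs, hE, hfac]
          have h7 : (2:ℝ)^(2*m+1) = 2 * ((2:ℝ)^m)^2 := by rw [pow_succ, ← pow_mul]; ring
          rw [h7]
          field_simp

lemma legendre_orth (m n : ℕ) :
    ∫ x in (-1:ℝ)..1, (legendre m).eval x * (legendre n).eval x =
      if m = n then 2 / (2*(n:ℝ)+1) else 0 := by
  rcases le_or_gt m n with h | h
  · exact legendre_orth_le h
  · have h2 := legendre_orth_le h.le
    rw [show (∫ x in (-1:ℝ)..1, (legendre m).eval x * (legendre n).eval x) =
      ∫ x in (-1:ℝ)..1, (legendre n).eval x * (legendre m).eval x from by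
        congr 1; funext x; ring, h2, if_neg h.ne', if_neg h.ne]

lemma shiftedLegendre_orth (m n : ℕ) :
    ∫ x in (0:ℝ)..1, shiftedLegendre m x * shiftedLegendre n x =
      if m = n then 1 / (2*(n:ℝ)+1) else 0 := by
  have key := intervalIntegral.integral_comp_mul_sub
    (fun y => (legendre m).eval y * (legendre n).eval y) (two_ne_zero) (1 : ℝ)
    (a := 0) (b := 1)
  norm_num at key
  simp only [_root_.shiftedLegendre]
  rw [key, legendre_orth]
  have h5 : (2*(n:ℝ)+1) ≠ 0 := by positivity
  split
  · field_simp
  · simp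

end Aux

/-- Orthogonality of the parametric Legendre rational functions:
`∫₀¹ R_m(c;x) R_n(c;x) dx = δ_{mn}/((1+c)(2n-1))`. -/
theorem legendreRationalC_orthogonality (c : ℝ) (hc : 0 < c) (m n : ℕ) (hm : 1 ≤ m)
    (hn : 1 ≤ n) :
    ∫ x in (0:ℝ)..1, legendreRationalC c m x * legendreRationalC c n x =
      (if m = n then 1 else 0) / ((1 + c) * (2 * (n : ℝ) - 1)) := by
  have hc1 : (0:ℝ) < 1 + c := by linarith
  have hpos : ∀ x ∈ Set.uIcc (0:ℝ) 1, 0 < 1 + c * x := by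
    intro x hx
    rw [Set.uIcc_of_le (by norm_num : (0:ℝ) ≤ 1)] at hx
    nlinarith [hx.1, hc]
  have hcontf : Continuous (fun t => shiftedLegendre (m-1) t * shiftedLegendre (n-1) t) := by
    unfold _root_.shiftedLegendre
    fun_prop
  have hderiv : ∀ x ∈ Set.uIcc (0:ℝ) 1,
      HasDerivAt (fun x : ℝ => (1 - x)/(1 + c * x)) (-(1+c)/(1+c*x)^2) x := by
    intro x hx
    have hne : (1 + c * x) ≠ 0 := ne_of_gt (hpos x hx)
    have h1 : HasDerivAt (fun x : ℝ => 1 - x) (-1) x := by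
      exact (hasDerivAt_id' x).const_sub (1:ℝ)
    have h2 : HasDerivAt (fun x : ℝ => 1 + c * x) c x := by
      simpa using ((hasDerivAt_id' x).const_mul c).const_add (1:ℝ)
    have h3 := h1.div h2 hne
    refine h3.congr_deriv ?_
    ring
  have hg'cont : ContinuousOn (fun x : ℝ => -(1+c)/(1+c*x)^2) (Set.uIcc (0:ℝ) 1) := by
    apply ContinuousOn.div continuousOn_const
    · fun_prop
    · intro x hx; exact pow_ne_zero _ (ne_of_gt (hpos x hx))
  have hsub := intervalIntegral.integral_comp_smul_deriv hderiv hg'cont hcontf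
  simp only [Function.comp, smul_eq_mul] at hsub
  rw [show (1 - (0:ℝ))/(1 + c*0) = 1 by norm_num,
    show (1 - (1:ℝ))/(1 + c*1) = 0 by norm_num] at hsub
  -- hsub : ∫ x in 0..1, -(1+c)/(1+c*x)^2 * (S(m-1)(g x) * S(n-1)(g x)) = ∫ u in 1..0, S S
  have hsign : ((-1:ℝ))^(m+n) = (-1:ℝ)^(m-1) * (-1:ℝ)^(n-1) := by
    have h : m + n = (m-1) + (n-1) + 2 := by omega
    rw [h, pow_add, pow_add]
    norm_num
  have hpt : Set.EqOn (fun x => legendreRationalC c m x * legendreRationalC c n x)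
      (fun x => ((-1:ℝ)^(m+n) * (-1) / (1+c)) *
        ((-(1+c)/(1+c*x)^2) *
          (shiftedLegendre (m-1) ((1-x)/(1+c*x)) * shiftedLegendre (n-1) ((1-x)/(1+c*x)))))
      (Set.uIcc (0:ℝ) 1) := by
    intro x hx
    have hcx := hpos x hx
    have hne : (1+c*x) ≠ 0 := ne_of_gt hcx
    have hcne : c ≠ 0 := ne_of_gt hc
    have h1c : (c+1) ≠ 0 := by linarith
    have h1c' : (1+c) ≠ 0 := by linarith
    simp only [legendreRationalC, alteredLegendreC]
    have hQ : (c / (c + 1)) * ((1-x)/(1+c*x) + 1 / c) = 1 / (1 + c * x) := by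
      field_simp
      ring
    rw [hQ, hsign]
    field_simp
  rw [intervalIntegral.integral_congr hpt, intervalIntegral.integral_const_mul, hsub,
    intervalIntegral.integral_symm, shiftedLegendre_orth]
  have h1c' : (1+c) ≠ 0 := by positivity
  rcases eq_or_ne m n with h | h
  · subst h
    have heq : m - 1 = m - 1 := rfl
    rw [if_pos heq, if_pos rfl]
    have hev : ((-1:ℝ))^(m+m) = 1 := by
      rw [← two_mul, pow_mul]
      norm_num
    rw [hev]
    have hcast : (2*((m-1:ℕ)):ℝ)+1 = 2*(m:ℝ)-1 := by
      have h' : ((m-1:ℕ):ℝ) = (m:ℝ) - 1 := by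
        push_cast [hm]
        ring
      rw [h']
      ring
    rw [hcast]
    have hm2 : (0:ℝ) < 2*(m:ℝ)-1 := by
      have : (1:ℝ) ≤ (m:ℝ) := by exact_mod_cast hm
      linarith
    field_simp
  · have hne' : ¬ (m - 1 = n - 1) := by omega
    rw [if_neg hne', if_neg h]
    simp
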